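/- Automatic boundedness of formal multipliers: let F and F' be complex Hilbert spaces with F' finite-dimensional, let (H, (π_n)_{n ∈ ℤ^d}) and (H', (π'_n)_{n ∈ ℤ^d}) be coefficient data of formal reproducing kernel Hilbert spaces with coefficient spaces F and F' respectively, and assume the family (π'_n) is separating. Let S : ℤ^d → L(F, F') be a family of bounded operators and let T : H → H' be a function such that for every f ∈ H and every n ∈ ℤ^d the partial sums Σ_{|m| ≤ M} S(n−m)(π_m f) converge in the norm of F', as M → ∞, to π'_n(T f). Then T is a bounded linear operator from H to H'. -/

import Mathlib

open ContinuousLinearMap Filter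

/-- The finite "ball" `{ℓ ∈ ℤ^d : |ℓ₁| + ⋯ + |ℓ_d| ≤ L}`. -/
noncomputable def intBall (d L : ℕ) : Finset (Fin d → ℤ) :=
  (Finset.Icc (fun _ => -(L : ℤ)) fun _ => (L : ℤ)).filter fun ℓ => ∑ i, |ℓ i| ≤ (L : ℤ)

/-- **Automatic boundedness of formal multipliers.**
Let `(H, π)` and `(H', π')` be coefficient data of formal reproducing kernel Hilbert
spaces with coefficient spaces `F` and `F'`, `F'` finite-dimensional and `(π'_n)`
separating.  If `T : H → H'` is a map such that for every `f ∈ H` and every `n` the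
convolution partial sums `∑_{|m| ≤ M} S(n-m)(π_m f)` converge in norm to `π'_n (T f)`,
then `T` is a bounded linear operator. -/
theorem multiplier_automatically_bounded
    {d : ℕ} {F F' H H' : Type*}
    [NormedAddCommGroup F] [InnerProductSpace ℂ F] [CompleteSpace F]
    [NormedAddCommGroup F'] [InnerProductSpace ℂ F'] [FiniteDimensional ℂ F']
    [NormedAddCommGroup H] [InnerProductSpace ℂ H] [CompleteSpace H]
    [NormedAddCommGroup H'] [InnerProductSpace ℂ H'] [CompleteSpace H']
    (π : (Fin d → ℤ) → H →L[ℂ] F) (π' : (Fin d → ℤ) → H' →L[ℂ] F')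
    (hsep : ∀ g : H', (∀ n, π' n g = 0) → g = 0)
    (S : (Fin d → ℤ) → F →L[ℂ] F')
    (T : H → H')
    (hT : ∀ (f : H) (n : Fin d → ℤ),
      Tendsto (fun M => ∑ m ∈ intBall d M, S (n - m) (π m f)) atTop (nhds (π' n (T f)))) :
    IsBoundedLinearMap ℂ T := by
  -- partial-sum continuous linear maps
  set P : (Fin d → ℤ) → ℕ → H →L[ℂ] F' :=
    fun n M => ∑ m ∈ intBall d M, (S (n - m)).comp (π m) with hP
  have hPapply : ∀ n M f, P n M f = ∑ m ∈ intBall d M, S (n - m) (π m f) := by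
    intro n M f
    simp [hP, ContinuousLinearMap.sum_apply]
  have htend : ∀ n : Fin d → ℤ,
      Tendsto (fun M x => P n M x) atTop (nhds (fun f => π' n (T f))) := by
    intro n
    rw [tendsto_pi_nhds]
    intro f
    simpa [hPapply] using hT f n
  -- the pointwise limits are continuous linear maps (Banach–Steinhaus)
  set Q : (Fin d → ℤ) → (H →L[ℂ] F') :=
    fun n => continuousLinearMapOfTendsto (P n) (htend n) with hQ
  have hQapply : ∀ n f, Q n f = π' n (T f) := fun n f => rfl
  -- linearity of T
  have hadd : ∀ f g, T (f + g) = T f + T g := by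
    intro f g
    have : ∀ n, π' n (T (f + g) - (T f + T g)) = 0 := by
      intro n
      simp [map_sub, ← hQapply, map_add]
    have := hsep _ this
    rwa [sub_eq_zero] at this
  have hsmul : ∀ (c : ℂ) f, T (c • f) = c • T f := by
    intro c f
    have : ∀ n, π' n (T (c • f) - c • T f) = 0 := by
      intro n
      simp [map_sub, ← hQapply, map_smul]
    have := hsep _ this
    rwa [sub_eq_zero] at this
  set Tlin : H →ₗ[ℂ] H' :=
    { toFun := T, map_add' := hadd, map_smul' := hsmul } with hTlin
  have hcont : Continuous Tlin := by
    apply Tlin.continuous_of_seq_closed_graph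
    intro u x y hu hTu
    have : ∀ n, π' n (y - T x) = 0 := by
      intro n
      have h1 : Tendsto (fun k => π' n (T (u k))) atTop (nhds (π' n y)) :=
        ((π' n).continuous.tendsto _).comp hTu
      have h2 : Tendsto (fun k => Q n (u k)) atTop (nhds (Q n x)) :=
        ((Q n).continuous.tendsto _).comp hu
      simp only [hQapply] at h2
      have := tendsto_nhds_unique h1 h2
      rw [map_sub, this, sub_self]
    have := hsep _ this
    rw [sub_eq_zero] at this
    exact this
  exact (⟨Tlin, hcont⟩ : H →L[ℂ] H').isBoundedLinearMap
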